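/- Let p₁,…,p_r ∈ S = ℂ[x₁,…,xₙ] be pairwise non-proportional nonzero linear forms with product p = p₁⋯p_r, and let m ≥ 1. Then D^(m)(p) = ⋂_{i=1}^r D^(m)(p_i), i.e. an order-m differential operator with polynomial coefficients preserves the ideal ⟨p⟩ if and only if it preserves each ideal ⟨p_i⟩. -/

import Mathlib

open MvPolynomial

noncomputable section

/-- The polynomial ring `S = ℂ[x₁,…,xₙ]`. -/
abbrev S (n : ℕ) : Type := MvPolynomial (Fin n) ℂ

/-- The finite set of exponent vectors `α ∈ ℕⁿ` with `|α| = m`. -/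
def degIdx (n m : ℕ) : Finset (Fin n → ℕ) :=
  (Fintype.piFinset fun _ : Fin n => Finset.range (m + 1)).filter fun α => ∑ i, α i = m

/-- The differential operator `∂^α`, the composition of the partial derivatives
`∂/∂xᵢ` applied `αᵢ` times. -/
def pd {n : ℕ} (α : Fin n → ℕ) : Module.End ℂ (S n) :=
  (List.ofFn fun i : Fin n => ((pderiv (R := ℂ) i).toLinearMap) ^ (α i)).prod

/-- The action of an order-`m` differential operator with polynomial coefficients
`c = (c_α)_{|α| = m}` on a polynomial: `c(f) = Σ_{|α|=m} c_α ∂^α f`. -/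
def applyOp {n m : ℕ} (c : degIdx n m → S n) (f : S n) : S n :=
  ∑ α : degIdx n m, c α * pd (α : Fin n → ℕ) f

lemma applyOp_add {n m : ℕ} (a b : degIdx n m → S n) (f : S n) :
    applyOp (a + b) f = applyOp a f + applyOp b f := by
  simp [applyOp, add_mul, Finset.sum_add_distrib]

lemma applyOp_smul {n m : ℕ} (s : S n) (a : degIdx n m → S n) (f : S n) :
    applyOp (s • a) f = s * applyOp a f := by
  simp [applyOp, Finset.mul_sum, mul_assoc]

lemma applyOp_zero {n m : ℕ} (f : S n) : applyOp (0 : degIdx n m → S n) f = 0 := by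
  simp [applyOp]

/-- `D^(m)(p)`: the `S`-module of order-`m` differential operators with polynomial
coefficients preserving the principal ideal `⟨p⟩`. -/
def Dm {n : ℕ} (m : ℕ) (p : S n) : Submodule (S n) (degIdx n m → S n) where
  carrier := {c | ∀ f ∈ Ideal.span {p}, applyOp c f ∈ Ideal.span {p}}
  add_mem' := by
    intro a b ha hb f hf
    rw [applyOp_add]
    exact Ideal.add_mem _ (ha f hf) (hb f hf)
  zero_mem' := by
    intro f hf
    rw [applyOp_zero]
    exact Ideal.zero_mem _
  smul_mem' := by
    intro s c hc f hf
    rw [applyOp_smul]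
    exact Ideal.mul_mem_left _ _ (hc f hf)

/-- A nonzero linear form. -/
def IsLinearForm {n : ℕ} (q : S n) : Prop := q ≠ 0 ∧ q.IsHomogeneous 1

/-- The linear forms of an arrangement are pairwise non-proportional. -/
def PairwiseNonProportional {n r : ℕ} (p : Fin r → S n) : Prop :=
  ∀ i j : Fin r, i ≠ j → ∀ a : ℂ, p i ≠ a • p j

end


noncomputable section

namespace DOaux

variable {n : ℕ}


variable {n : ℕ}

/-- `T` is a differential operator of order `≤ k` (Grothendieck-style). -/
def IsDiffOp : ℕ → Module.End ℂ (S n) → Prop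
  | 0, T => ∀ u f : S n, T (u * f) = u * T f
  | k+1, T => ∀ u : S n,
      IsDiffOp k (T * LinearMap.mulLeft ℂ u - LinearMap.mulLeft ℂ u * T)

lemma IsDiffOp.cast {a b : ℕ} {T : Module.End ℂ (S n)} (h : a = b)
    (hT : IsDiffOp a T) : IsDiffOp b T := h ▸ hT

lemma isDiffOp_zero : ∀ k, IsDiffOp k (0 : Module.End ℂ (S n))
  | 0 => fun u f => by simp
  | k+1 => fun u => by
      have : (0 : Module.End ℂ (S n)) * LinearMap.mulLeft ℂ u
          - LinearMap.mulLeft ℂ u * 0 = 0 := by simp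
      rw [this]; exact isDiffOp_zero k

lemma isDiffOp_one : IsDiffOp 0 (1 : Module.End ℂ (S n)) := fun u f => by simp

lemma isDiffOp_mulLeft (u : S n) : IsDiffOp 0 (LinearMap.mulLeft ℂ u) := fun v f => by
  simp [LinearMap.mulLeft_apply, mul_left_comm]

lemma IsDiffOp.add : ∀ (k : ℕ) {T U : Module.End ℂ (S n)},
    IsDiffOp k T → IsDiffOp k U → IsDiffOp k (T + U)
  | 0, T, U, hT, hU => fun u f => by
      simp only [LinearMap.add_apply, hT u f, hU u f, mul_add]
  | k+1, T, U, hT, hU => fun u => by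
      have : (T + U) * LinearMap.mulLeft ℂ u - LinearMap.mulLeft ℂ u * (T + U)
          = (T * LinearMap.mulLeft ℂ u - LinearMap.mulLeft ℂ u * T)
            + (U * LinearMap.mulLeft ℂ u - LinearMap.mulLeft ℂ u * U) := by
        noncomm_ring
      rw [this]
      exact IsDiffOp.add k (hT u) (hU u)

lemma order_zero_comm {T : Module.End ℂ (S n)} (hT : IsDiffOp 0 T) (u : S n) :
    T * LinearMap.mulLeft ℂ u = LinearMap.mulLeft ℂ u * T := by
  refine LinearMap.ext fun f => ?_
  simp only [Module.End.mul_apply, LinearMap.mulLeft_apply]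
  exact hT u f

private lemma bracket_mul (T U M : Module.End ℂ (S n)) :
    (T * U) * M - M * (T * U) = T * (U * M - M * U) + (T * M - M * T) * U := by
  refine LinearMap.ext fun f => ?_
  simp only [LinearMap.sub_apply, LinearMap.add_apply, Module.End.mul_apply, map_sub]
  abel

lemma isDiffOp_mul_aux : ∀ (k a b : ℕ) (T U : Module.End ℂ (S n)), a + b = k →
    IsDiffOp a T → IsDiffOp b U → IsDiffOp k (T * U) := by
  intro k
  induction k with
  | zero =>
    intro a b T U hab hT hU
    obtain ⟨rfl, rfl⟩ : a = 0 ∧ b = 0 := by omega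
    intro u f
    simp only [Module.End.mul_apply, hU u f, hT u (U f)]
  | succ k IH =>
    intro a b T U hab hT hU
    intro u
    rw [bracket_mul]
    rcases a with _ | a
    · rw [order_zero_comm hT u, sub_self, zero_mul, add_zero]
      have hb : b = k + 1 := by omega
      subst hb
      exact IH 0 k T _ (by omega) hT (hU u)
    · rcases b with _ | b
      · rw [order_zero_comm hU u, sub_self, mul_zero, zero_add]
        exact IH a 0 _ U (by omega) (hT u) hU
      · exact IsDiffOp.add k
          (IH (a+1) b T _ (by omega) hT (hU u))
          (IH a (b+1) _ U (by omega) (hT u) hU)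

lemma IsDiffOp.mul {a b : ℕ} {T U : Module.End ℂ (S n)}
    (hT : IsDiffOp a T) (hU : IsDiffOp b U) : IsDiffOp (a + b) (T * U) :=
  isDiffOp_mul_aux (a+b) a b T U rfl hT hU

lemma isDiffOp_pderiv (i : Fin n) : IsDiffOp 1 ((pderiv (R := ℂ) i).toLinearMap) := by
  intro u
  have : (pderiv (R := ℂ) i).toLinearMap * LinearMap.mulLeft ℂ u
      - LinearMap.mulLeft ℂ u * (pderiv (R := ℂ) i).toLinearMap
      = LinearMap.mulLeft ℂ (pderiv i u) := by
    refine LinearMap.ext fun f => ?_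
    simp only [LinearMap.sub_apply, Module.End.mul_apply, LinearMap.mulLeft_apply,
      Derivation.coeFn_coe]
    rw [pderiv_mul]
    ring
  rw [this]
  exact isDiffOp_mulLeft _

lemma isDiffOp_pderiv_pow (i : Fin n) : ∀ j : ℕ,
    IsDiffOp j (((pderiv (R := ℂ) i).toLinearMap) ^ j)
  | 0 => by rw [pow_zero]; exact isDiffOp_one
  | j+1 => by
    rw [pow_succ]
    exact (isDiffOp_pderiv_pow i j).mul (isDiffOp_pderiv i)

lemma isDiffOp_listProd : ∀ L : List (ℕ × Module.End ℂ (S n)),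
    (∀ x ∈ L, IsDiffOp x.1 x.2) →
    IsDiffOp (L.map Prod.fst).sum (L.map Prod.snd).prod
  | [], _ => by simpa using isDiffOp_one
  | x :: L, h => by
    simp only [List.map_cons, List.sum_cons, List.prod_cons]
    exact (h x (by simp)).mul
      (isDiffOp_listProd L fun y hy => h y (List.mem_cons_of_mem _ hy))

lemma isDiffOp_pd (α : Fin n → ℕ) : IsDiffOp (∑ i, α i) (pd α) := by
  have := isDiffOp_listProd
    (List.ofFn fun i : Fin n => (α i, ((pderiv (R := ℂ) i).toLinearMap) ^ (α i)))
    (by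
      intro x hx
      rw [List.mem_ofFn] at hx
      obtain ⟨i, rfl⟩ := hx
      exact isDiffOp_pderiv_pow i (α i))
  simpa [pd, List.map_ofFn, Function.comp_def, List.sum_ofFn] using this

/-- The key commutator lemma. -/
lemma dvd_of_dvd_mul {k : ℕ} {ℓ q : S n} (hp : Prime ℓ) (hq : ¬ ℓ ∣ q) :
    ∀ (T : Module.End ℂ (S n)), IsDiffOp k T →
      (∀ g, ℓ ∣ T (q * g)) → ∀ g, ℓ ∣ T g := by
  induction k with
  | zero =>
    intro T hT h g
    have h1 : ℓ ∣ q * T 1 := by simpa using (hT q 1) ▸ h 1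
    have h2 : ℓ ∣ T 1 := (hp.2.2 q (T 1) h1).resolve_left hq
    have : T g = g * T 1 := by simpa using hT g 1
    rw [this]
    exact h2.mul_left g
  | succ k IH =>
    intro T hT h g
    set T' : Module.End ℂ (S n) :=
      T * LinearMap.mulLeft ℂ q - LinearMap.mulLeft ℂ q * T with hT'def
    have hT' : IsDiffOp k T' := hT q
    have h' : ∀ g, ℓ ∣ T' (q * g) := by
      intro g
      have : T' (q * g) = T (q * (q * g)) - q * T (q * g) := by
        simp [hT'def, LinearMap.sub_apply, Module.End.mul_apply, LinearMap.mulLeft_apply]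
      rw [this]
      exact dvd_sub (h (q * g)) ((h g).mul_left q)
    have hTg : ∀ g, ℓ ∣ T' g := IH T' hT' h'
    have : q * T g = T (q * g) - T' g := by
      simp [hT'def, LinearMap.sub_apply, Module.End.mul_apply, LinearMap.mulLeft_apply]
    have : ℓ ∣ q * T g := this ▸ dvd_sub (h g) (hTg g)
    exact (hp.2.2 q (T g) this).resolve_left hq



variable {n : ℕ}

lemma degree_single (t : Fin n) : (Finsupp.single t 1).degree = 1 := by
  rw [Finsupp.degree_single]

lemma degree_add (a b : Fin n →₀ ℕ) : (a + b).degree = a.degree + b.degree := by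
  simp [Finsupp.degree_eq_weight_one, map_add]

lemma degree_one_eq_single {d : Fin n →₀ ℕ} (hd : d.degree = 1) :
    ∃ t, d = Finsupp.single t 1 := by
  have hne : d ≠ 0 := by
    intro h; rw [h] at hd; simp at hd
  obtain ⟨t, ht⟩ := Finsupp.support_nonempty_iff.mpr hne
  have htpos : 1 ≤ d t := Nat.one_le_iff_ne_zero.mpr (Finsupp.mem_support_iff.mp ht)
  have hle : d t ≤ 1 := hd ▸ Finsupp.le_degree t d
  refine ⟨t, Finsupp.eq_single_iff.mpr ⟨?_, le_antisymm hle htpos⟩⟩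
  intro s hs
  simp only [Finset.mem_singleton]
  by_contra hst
  have h2 : d s + d t ≤ d.degree := by
    have : ({s, t} : Finset (Fin n)) ⊆ d.support := by
      intro x hx
      simp only [Finset.mem_insert, Finset.mem_singleton] at hx
      rcases hx with rfl | rfl <;> assumption
    calc d s + d t = ∑ x ∈ ({s, t} : Finset (Fin n)), d x := by
          rw [Finset.sum_pair hst]
      _ ≤ ∑ x ∈ d.support, d x := Finset.sum_le_sum_of_subset this
  have hspos : 1 ≤ d s := Nat.one_le_iff_ne_zero.mpr (Finsupp.mem_support_iff.mp hs)
  omega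

lemma linear_decomp {q : S n} (hq : q.IsHomogeneous 1) :
    q = ∑ t, C (coeff (Finsupp.single t 1) q) * X t := by
  apply MvPolynomial.ext
  intro d
  rw [coeff_sum]
  simp only [coeff_C_mul, coeff_X']
  by_cases hd : ∃ t, d = Finsupp.single t 1
  · obtain ⟨t, rfl⟩ := hd
    rw [Finset.sum_eq_single t]
    · simp
    · intro s _ hst
      rw [if_neg, mul_zero]
      intro h
      exact hst (Finsupp.single_left_injective one_ne_zero h)
    · simp
  · rw [Finset.sum_eq_zero, hq.coeff_eq_zero]
    · intro h
      exact hd (degree_one_eq_single h)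
    · intro s _
      rw [if_neg, mul_zero]
      intro h
      exact hd ⟨s, h.symm⟩

lemma coeff_single_mul {ℓ : S n} (hℓ : ℓ.IsHomogeneous 1) (u : S n) (t : Fin n) :
    coeff (Finsupp.single t 1) (ℓ * u)
      = coeff (Finsupp.single t 1) ℓ * coeff 0 u := by
  rw [coeff_mul]
  apply Finset.sum_eq_single_of_mem (⟨Finsupp.single t 1, 0⟩ : (Fin n →₀ ℕ) × (Fin n →₀ ℕ))
  · rw [Finset.HasAntidiagonal.mem_antidiagonal, add_zero]
  · rintro ⟨a, b⟩ hab hne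
    rw [Finset.HasAntidiagonal.mem_antidiagonal] at hab
    dsimp only at hab ⊢
    by_cases ha : a.degree = 1
    · exfalso
      have hb : b.degree = 0 := by
        have := degree_add a b
        rw [hab, degree_single] at this
        omega
      have hb0 : b = 0 := (Finsupp.degree_eq_zero_iff b).mp hb
      subst hb0
      rw [add_zero] at hab
      exact hne (Prod.ext hab rfl)
    · rw [hℓ.coeff_eq_zero ha, zero_mul]

lemma eq_smul_of_dvd {ℓ w : S n} (hℓ : ℓ.IsHomogeneous 1) (hw : w.IsHomogeneous 1)
    (hdvd : ℓ ∣ w) : ∃ a : ℂ, w = a • ℓ := by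
  obtain ⟨u, rfl⟩ := hdvd
  refine ⟨coeff 0 u, ?_⟩
  rw [smul_eq_C_mul]
  calc ℓ * u = ∑ t, C (coeff (Finsupp.single t 1) (ℓ * u)) * X t := linear_decomp hw
    _ = ∑ t, C (coeff 0 u) * (C (coeff (Finsupp.single t 1) ℓ) * X t) := by
        refine Finset.sum_congr rfl fun t _ => ?_
        rw [coeff_single_mul hℓ u t, C_mul]
        ring
    _ = C (coeff 0 u) * ℓ := by
        rw [← Finset.mul_sum, ← linear_decomp hℓ]

lemma prime_X_mv (k : Fin n) : Prime (X k : S n) := by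
  rcases n with _ | n'
  · exact k.elim0
  · refine (MulEquiv.prime_iff (renameEquiv ℂ (Equiv.swap k (0 : Fin (n' + 1)))).toRingEquiv.toMulEquiv).mp ?_
    have h1 : (renameEquiv ℂ (Equiv.swap k (0 : Fin (n' + 1)))).toRingEquiv.toMulEquiv (X k)
        = (X 0 : S (n' + 1)) := by
      show rename (Equiv.swap k (0 : Fin (n' + 1))) (X k) = _
      rw [rename_X, Equiv.swap_apply_left]
    rw [h1]
    refine (MulEquiv.prime_iff (finSuccEquiv ℂ n').toRingEquiv.toMulEquiv).mp ?_
    have h2 : (finSuccEquiv ℂ n').toRingEquiv.toMulEquiv (X 0) = Polynomial.X := by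
      show finSuccEquiv ℂ n' (X 0) = _
      exact finSuccEquiv_X_zero
    rw [h2]
    exact Polynomial.prime_X

lemma prime_of_linear {q : S n} (hq0 : q ≠ 0) (hq1 : q.IsHomogeneous 1) : Prime q := by
  classical
  set c : Fin n → ℂ := fun t => coeff (Finsupp.single t 1) q with hc
  have hdecomp : q = ∑ t, C (c t) * X t := linear_decomp hq1
  have hex : ∃ k, c k ≠ 0 := by
    by_contra h
    push_neg at h
    apply hq0
    rw [hdecomp]
    simp [h]
  obtain ⟨k, hk⟩ := hex
  set u : Fin n → S n :=
    Function.update (fun t => (X t : S n)) k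
      (C (c k)⁻¹ * (X k - ∑ j ∈ Finset.univ.erase k, C (c j) * X j)) with hu
  set v : Fin n → S n := Function.update (fun t => (X t : S n)) k q with hv
  have huk : u k = C (c k)⁻¹ * (X k - ∑ j ∈ Finset.univ.erase k, C (c j) * X j) := by
    rw [hu, Function.update_self]
  have hut : ∀ t, t ≠ k → u t = X t := by
    intro t ht; rw [hu, Function.update_of_ne ht]
  have hvk : v k = q := by rw [hv, Function.update_self]
  have hvt : ∀ t, t ≠ k → v t = X t := by
    intro t ht; rw [hv, Function.update_of_ne ht]
  have hsum : q = C (c k) * X k + ∑ j ∈ Finset.univ.erase k, C (c j) * X j := by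
    rw [hdecomp]
    exact (Finset.add_sum_erase _ (fun j => C (c j) * X j) (Finset.mem_univ k)).symm
  have hFq : aeval u q = X k := by
    conv_lhs => rw [hsum]
    rw [map_add, map_mul, map_sum, aeval_C, aeval_X, huk]
    have h1 : ∀ j ∈ Finset.univ.erase k, aeval u (C (c j) * X j) = C (c j) * X j := by
      intro j hj
      rw [map_mul, aeval_C, aeval_X, hut j (Finset.ne_of_mem_erase hj), algebraMap_eq]
    rw [Finset.sum_congr rfl h1, algebraMap_eq, ← mul_assoc, ← C_mul,
      mul_inv_cancel₀ hk, C_1, one_mul]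
    ring
  have hGsum : aeval v (∑ j ∈ Finset.univ.erase k, C (c j) * X j)
      = ∑ j ∈ Finset.univ.erase k, C (c j) * X j := by
    rw [map_sum]
    refine Finset.sum_congr rfl fun j hj => ?_
    rw [map_mul, aeval_C, aeval_X, hvt j (Finset.ne_of_mem_erase hj), algebraMap_eq]
  have hGF : (aeval v).comp (aeval u) = AlgHom.id ℂ (S n) := by
    apply MvPolynomial.algHom_ext
    intro t
    simp only [AlgHom.comp_apply, AlgHom.id_apply, aeval_X]
    by_cases ht : t = k
    · subst ht
      rw [huk, map_mul, map_sub, aeval_C, aeval_X, hGsum, hvk, algebraMap_eq]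
      conv_lhs => rw [hsum]
      rw [add_sub_cancel_right, ← mul_assoc, ← C_mul, inv_mul_cancel₀ hk, C_1, one_mul]
    · rw [hut t ht, aeval_X, hvt t ht]
  have hFG : (aeval u).comp (aeval v) = AlgHom.id ℂ (S n) := by
    apply MvPolynomial.algHom_ext
    intro t
    simp only [AlgHom.comp_apply, AlgHom.id_apply, aeval_X]
    by_cases ht : t = k
    · subst ht
      rw [hvk]
      exact hFq
    · rw [hvt t ht, aeval_X, hut t ht]
  let e : S n ≃ₐ[ℂ] S n := AlgEquiv.ofAlgHom (aeval u) (aeval v) hFG hGF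
  refine (MulEquiv.prime_iff e.toRingEquiv.toMulEquiv).mp ?_
  have he : e.toRingEquiv.toMulEquiv q = X k := hFq
  rw [he]
  exact prime_X_mv k


def opOf {n m : ℕ} (c : degIdx n m → S n) : Module.End ℂ (S n) :=
  ∑ α : degIdx n m, LinearMap.mulLeft ℂ (c α) * pd (α : Fin n → ℕ)

lemma opOf_apply {n m : ℕ} (c : degIdx n m → S n) (f : S n) :
    opOf c f = applyOp c f := by
  simp [opOf, applyOp, LinearMap.sum_apply, Module.End.mul_apply, LinearMap.mulLeft_apply]

lemma isDiffOp_opOf {n m : ℕ} (c : degIdx n m → S n) : IsDiffOp m (opOf c) := by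
  classical
  apply Finset.sum_induction _ (IsDiffOp m) (fun a b => IsDiffOp.add m) (isDiffOp_zero m)
  intro α _
  have hα : ∑ i, (α : Fin n → ℕ) i = m := (Finset.mem_filter.mp α.2).2
  exact ((isDiffOp_mulLeft (c α)).mul (isDiffOp_pd (α : Fin n → ℕ))).cast (by omega)

lemma prod_dvd {n r : ℕ} {p : Fin r → S n} (hprime : ∀ i, Prime (p i))
    (hnd : ∀ i j, i ≠ j → ¬ p i ∣ p j) :
    ∀ (s : Finset (Fin r)) (x : S n), (∀ i ∈ s, p i ∣ x) → (∏ i ∈ s, p i) ∣ x := by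
  classical
  intro s
  induction s using Finset.induction_on with
  | empty => simp
  | @insert a s ha IH =>
    intro x hx
    obtain ⟨y, rfl⟩ := hx a (Finset.mem_insert_self a s)
    rw [Finset.prod_insert ha]
    refine mul_dvd_mul_left (p a) (IH y ?_)
    intro i hi
    have hia : i ≠ a := by rintro rfl; exact ha hi
    have := hx i (Finset.mem_insert_of_mem hi)
    exact ((hprime i).2.2 _ _ this).resolve_left (hnd i a hia)

lemma mem_Dm {n m : ℕ} {w : S n} {c : degIdx n m → S n} :
    c ∈ Dm m w ↔ ∀ f ∈ Ideal.span {w}, applyOp c f ∈ Ideal.span {w} := Iff.rfl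

end DOaux

end

/-- For pairwise non-proportional nonzero linear forms `p₁,…,p_r`
with product `p = p₁⋯p_r` and `m ≥ 1`, `D^(m)(p) = ⋂ᵢ D^(m)(pᵢ)`. -/
theorem Dm_prod_eq_iInf {n r m : ℕ} (hm : 1 ≤ m) (p : Fin r → S n)
    (hlin : ∀ i, IsLinearForm (p i)) (hnp : PairwiseNonProportional p) :
    Dm m (∏ i, p i) = ⨅ i : Fin r, Dm m (p i) := by
  classical
  have hprime : ∀ i, Prime (p i) := fun i => DOaux.prime_of_linear (hlin i).1 (hlin i).2
  have hnd : ∀ i j, i ≠ j → ¬ p i ∣ p j := by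
    intro i j hij hdvd
    obtain ⟨a, ha⟩ := DOaux.eq_smul_of_dvd (hlin i).2 (hlin j).2 hdvd
    exact hnp j i hij.symm a ha
  apply le_antisymm
  · rw [le_iInf_iff]
    intro i c hc
    rw [DOaux.mem_Dm] at hc ⊢
    intro f hf
    rw [Ideal.mem_span_singleton] at hf ⊢
    obtain ⟨h, rfl⟩ := hf
    set q : S n := ∏ j ∈ Finset.univ.erase i, p j with hq
    have hfac : (∏ j, p j) = p i * q := (Finset.mul_prod_erase _ _ (Finset.mem_univ i)).symm
    have hqnd : ¬ p i ∣ q := by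
      intro hd
      obtain ⟨j, hj, hdj⟩ := (hprime i).exists_mem_finset_dvd hd
      exact hnd i j (Finset.ne_of_mem_erase hj).symm hdj
    set T : Module.End ℂ (S n) := DOaux.opOf c * LinearMap.mulLeft ℂ (p i) with hT
    have hTdiff : DOaux.IsDiffOp m T :=
      ((DOaux.isDiffOp_opOf c).mul (DOaux.isDiffOp_mulLeft (p i))).cast (by omega)
    have hTq : ∀ g, p i ∣ T (q * g) := by
      intro g
      have hmem : (∏ j, p j) * g ∈ Ideal.span {∏ j, p j} :=
        Ideal.mem_span_singleton.mpr ⟨g, rfl⟩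
      have h1 := hc _ hmem
      rw [Ideal.mem_span_singleton] at h1
      have h2 : p i ∣ applyOp c ((∏ j, p j) * g) :=
        dvd_trans (⟨q, hfac⟩ : p i ∣ ∏ j, p j) h1
      have h3 : T (q * g) = applyOp c ((∏ j, p j) * g) := by
        rw [hT]
        simp only [Module.End.mul_apply, LinearMap.mulLeft_apply]
        rw [DOaux.opOf_apply, hfac, mul_assoc]
      rw [h3]; exact h2
    have hfin := DOaux.dvd_of_dvd_mul (hprime i) hqnd T hTdiff hTq h
    have hTh : T h = applyOp c (p i * h) := by
      rw [hT]
      simp only [Module.End.mul_apply, LinearMap.mulLeft_apply]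
      rw [DOaux.opOf_apply]
    rwa [hTh] at hfin
  · intro c hc
    rw [Submodule.mem_iInf] at hc
    rw [DOaux.mem_Dm]
    intro f hf
    rw [Ideal.mem_span_singleton] at hf ⊢
    refine DOaux.prod_dvd hprime hnd Finset.univ (applyOp c f) ?_
    intro i _
    have hfi : f ∈ Ideal.span {p i} := Ideal.mem_span_singleton.mpr
      (dvd_trans (Finset.dvd_prod_of_mem p (Finset.mem_univ i)) hf)
    have := hc i f hfi
    rwa [Ideal.mem_span_singleton] at this
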